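/- arXiv:2102.07149 — 2 statements merged into one kernel-verified Lean document; each statement's English description precedes it below -/
import Mathlib

section
/- Let k > 3 and p ≥ 1. Then: (1) (R^p·ω)(e_1, e_{k−1}, …, e_1, e_{k−1}) with p+1 pairs (e_1, e_{k−1}) equals 0; (2) (R^p·ω)(e_1, e_{k−1}, …, e_1, e_{k−1}, e_2, e_{k−1}) with p leading pairs (e_1, e_{k−1}) equals (−1)^p ε^p (α ω(e_1, e_{k−1}) + ω(e_2, e_{k−1})); (3) for every i ∈ {1, …, 2n} \ {2, k}: (R^p·ω)(e_1, e_{k−1}, …, e_1, e_{k−1}, e_i, e_k) with p leading pairs (e_1, e_{k−1}) equals ε^p (α ω(e_i, e_{k−1}) + ω(e_i, e_k)). -/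
noncomputable section

/-- Gauss-equation curvature `R(X,Y)Z = h(Y,Z)·S(X) − h(X,Z)·S(Y)`. -/
def RR {V : Type*} [AddCommGroup V] [Module ℝ V]
    (h : V →ₗ[ℝ] V →ₗ[ℝ] ℝ) (S : V →ₗ[ℝ] V) (X Y Z : V) : V :=
  h Y Z • S X - h X Z • S Y

/-- One application of the curvature action on an `m`-linear form (encoded as a
function on lists of vectors): `(R·T)(X,Y,Z₁,…,Zₘ) = −∑ᵢ T(Z₁,…,R(X,Y)Zᵢ,…,Zₘ)`;
the two newest (leftmost) arguments are consumed. -/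
def RAct {V : Type*} [AddCommGroup V] [Module ℝ V]
    (h : V →ₗ[ℝ] V →ₗ[ℝ] ℝ) (S : V →ₗ[ℝ] V) (T : List V → ℝ) : List V → ℝ
  | X :: Y :: Zs =>
      -∑ i ∈ Finset.range Zs.length, T (Zs.set i (RR h S X Y (Zs.getD i 0)))
  | _ => 0

/-- `R^p · ω`, as a function on lists of vectors (of length `2p+2`):
`R⁰·ω = ω` and `R^p·ω = R·(R^{p−1}·ω)`. -/
def Rpow {V : Type*} [AddCommGroup V] [Module ℝ V]
    (h : V →ₗ[ℝ] V →ₗ[ℝ] ℝ) (S : V →ₗ[ℝ] V) (ω : V →ₗ[ℝ] V →ₗ[ℝ] ℝ) (p : ℕ) :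
    List V → ℝ :=
  (RAct h S)^[p] (fun l => ω (l.getD 0 0) (l.getD 1 0))

/-- The list `X, Y, X, Y, …` with `p` pairs `(X, Y)`. -/
def pairList {V : Type*} (X Y : V) : ℕ → List V
  | 0 => []
  | p + 1 => X :: Y :: pairList X Y p

/-- The list `f 1, y, f 2, y, …, f p, y`. -/
def interleave {V : Type*} (f : ℕ → V) (y : V) : ℕ → List V
  | 0 => []
  | p + 1 => interleave f y p ++ [f (p + 1), y]

section Aux

variable {V : Type*} [AddCommGroup V] [Module ℝ V]
  (h : V →ₗ[ℝ] V →ₗ[ℝ] ℝ) (S : V →ₗ[ℝ] V) (ω : V →ₗ[ℝ] V →ₗ[ℝ] ℝ)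

lemma Rpow_zero_eval (x y : V) (l : List V) : Rpow h S ω 0 (x :: y :: l) = ω x y := by
  simp [Rpow]

lemma Rpow_succ_eval (p : ℕ) (X Y : V) (Zs : List V) :
    Rpow h S ω (p+1) (X :: Y :: Zs) =
      -∑ i ∈ Finset.range Zs.length,
        Rpow h S ω p (Zs.set i (RR h S X Y (Zs.getD i 0))) := by
  show (RAct h S)^[p+1] _ _ = _
  rw [Function.iterate_succ_apply']
  rfl

lemma RR_lin1 (a b : ℝ) (x y Y Z : V) :
    RR h S (a • x + b • y) Y Z = a • RR h S x Y Z + b • RR h S y Y Z := by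
  simp only [RR, map_add, map_smul, LinearMap.add_apply, LinearMap.smul_apply, smul_eq_mul]
  module

lemma RR_lin2 (a b : ℝ) (X x y Z : V) :
    RR h S X (a • x + b • y) Z = a • RR h S X x Z + b • RR h S X y Z := by
  simp only [RR, map_add, map_smul, LinearMap.add_apply, LinearMap.smul_apply, smul_eq_mul]
  module

lemma RR_lin3 (a b : ℝ) (X Y x y : V) :
    RR h S X Y (a • x + b • y) = a • RR h S X Y x + b • RR h S X Y y := by
  simp only [RR, map_add, map_smul, LinearMap.add_apply, LinearMap.smul_apply, smul_eq_mul]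
  module

lemma Rpow_lin : ∀ (p : ℕ) (l : List V), l.length = 2*p+2 → ∀ i, i < l.length →
    ∀ (a b : ℝ) (x y : V),
    Rpow h S ω p (l.set i (a • x + b • y)) =
      a * Rpow h S ω p (l.set i x) + b * Rpow h S ω p (l.set i y) := by
  intro p
  induction p with
  | zero =>
    intro l hl i hi a b x y
    obtain ⟨u, v, rfl⟩ := List.length_eq_two.mp hl
    simp only [List.length_cons, List.length_nil] at hi
    interval_cases i
    · simp only [List.set]
      rw [Rpow_zero_eval, Rpow_zero_eval, Rpow_zero_eval]
      simp
    · simp only [List.set]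
      rw [Rpow_zero_eval, Rpow_zero_eval, Rpow_zero_eval]
      simp
  | succ p ih =>
    intro l hl i hi a b x y
    match l with
    | X :: Y :: Zs =>
      have hZs : Zs.length = 2*p+2 := by simp only [List.length_cons] at hl; omega
      match i with
      | 0 =>
        simp only [List.set]
        rw [Rpow_succ_eval, Rpow_succ_eval, Rpow_succ_eval]
        have hterm : ∀ j ∈ Finset.range Zs.length,
            Rpow h S ω p (Zs.set j (RR h S (a • x + b • y) Y (Zs.getD j 0))) =
            a * Rpow h S ω p (Zs.set j (RR h S x Y (Zs.getD j 0))) +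
            b * Rpow h S ω p (Zs.set j (RR h S y Y (Zs.getD j 0))) := by
          intro j hj
          rw [RR_lin1]
          exact ih Zs hZs j (Finset.mem_range.mp hj) a b _ _
        rw [Finset.sum_congr rfl hterm, Finset.sum_add_distrib, ← Finset.mul_sum,
          ← Finset.mul_sum]
        ring
      | 1 =>
        simp only [List.set]
        rw [Rpow_succ_eval, Rpow_succ_eval, Rpow_succ_eval]
        have hterm : ∀ j ∈ Finset.range Zs.length,
            Rpow h S ω p (Zs.set j (RR h S X (a • x + b • y) (Zs.getD j 0))) =
            a * Rpow h S ω p (Zs.set j (RR h S X x (Zs.getD j 0))) +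
            b * Rpow h S ω p (Zs.set j (RR h S X y (Zs.getD j 0))) := by
          intro j hj
          rw [RR_lin2]
          exact ih Zs hZs j (Finset.mem_range.mp hj) a b _ _
        rw [Finset.sum_congr rfl hterm, Finset.sum_add_distrib, ← Finset.mul_sum,
          ← Finset.mul_sum]
        ring
      | Nat.succ (Nat.succ m) =>
        have hm : m < Zs.length := by simp at hi; omega
        simp only [List.set]
        rw [Rpow_succ_eval, Rpow_succ_eval, Rpow_succ_eval]
        simp only [List.length_set]
        have hterm : ∀ j ∈ Finset.range Zs.length, ∀ w : V,
            (Zs.set m w).set j (RR h S X Y ((Zs.set m w).getD j 0)) =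
              if j = m then Zs.set m (RR h S X Y w)
              else (Zs.set j (RR h S X Y (Zs.getD j 0))).set m w := by
          intro j hj w
          by_cases hjm : j = m
          · subst hjm
            rw [if_pos rfl, List.set_set]
            congr 1
            simp [List.getD, List.getElem?_set_self', hm]
          · rw [if_neg hjm]
            rw [show (Zs.set m w).getD j 0 = Zs.getD j 0 by
              simp [List.getD, List.getElem?_set_ne (fun hh => hjm hh.symm)]]
            rw [List.set_comm _ _ (fun hh => hjm hh.symm)]
        have hterm2 : ∀ j ∈ Finset.range Zs.length,
            Rpow h S ω p ((Zs.set m (a • x + b • y)).set j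
              (RR h S X Y ((Zs.set m (a • x + b • y)).getD j 0))) =
            a * Rpow h S ω p ((Zs.set m x).set j (RR h S X Y ((Zs.set m x).getD j 0))) +
            b * Rpow h S ω p ((Zs.set m y).set j (RR h S X Y ((Zs.set m y).getD j 0))) := by
          intro j hj
          rw [hterm j hj, hterm j hj, hterm j hj]
          by_cases hjm : j = m
          · rw [if_pos hjm, if_pos hjm, if_pos hjm, RR_lin3]
            exact ih Zs hZs m hm a b _ _
          · rw [if_neg hjm, if_neg hjm, if_neg hjm]
            exact ih _ (by simpa using hZs) m (by simpa using hm) a b _ _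
        rw [Finset.sum_congr rfl hterm2, Finset.sum_add_distrib, ← Finset.mul_sum,
          ← Finset.mul_sum]
        ring

lemma Rpow_set_zero (p : ℕ) (l : List V) (hl : l.length = 2*p+2) (i : ℕ) (hi : i < l.length) :
    Rpow h S ω p (l.set i (0 : V)) = 0 := by
  have := Rpow_lin h S ω p l hl i hi 0 0 0 0
  simpa using this

lemma pairList_length (X Y : V) : ∀ q, (pairList X Y q).length = 2*q := by
  intro q
  induction q with
  | zero => simp [pairList]
  | succ q ih => simp [pairList, ih]; ring

lemma pairList_snoc (X Y : V) : ∀ q, pairList X Y (q+1) = pairList X Y q ++ [X, Y] := by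
  intro q
  induction q with
  | zero => simp [pairList]
  | succ q ih =>
    show X :: Y :: pairList X Y (q+1) = X :: Y :: (pairList X Y q ++ [X, Y])
    rw [ih]

lemma pairList_getD (X Y : V) : ∀ q j, j < 2*q →
    (pairList X Y q).getD j 0 = if j % 2 = 0 then X else Y := by
  intro q
  induction q with
  | zero => intro j hj; omega
  | succ q ih =>
    intro j hj
    match j with
    | 0 => simp [pairList]
    | 1 => simp [pairList]
    | Nat.succ (Nat.succ m) =>
      show (pairList X Y q).getD m 0 = _
      rw [ih m (by omega)]
      split_ifs <;> first | rfl | (exfalso; omega)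

lemma set_pair_append (X Y : V) (q : ℕ) (L : List V) (j : ℕ) (w : V) :
    (pairList X Y q ++ L).set (2*q + j) w = pairList X Y q ++ L.set j w := by
  rw [show 2*q + j = (pairList X Y q).length + j by rw [pairList_length]]
  rw [List.set_append_right] <;> simp

lemma getD_pair_append (X Y : V) (q : ℕ) (L : List V) (j : ℕ) :
    (pairList X Y q ++ L).getD (2*q + j) 0 = L.getD j 0 := by
  rw [List.getD_append_right]
  · congr 1; rw [pairList_length]; omega
  · rw [pairList_length]; omega

lemma stepL (X Y : V) (hA1 : RR h S X Y X = 0) (hA2 : RR h S X Y Y = 0)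
    (p : ℕ) (u v : V) :
    Rpow h S ω (p+1) (pairList X Y (p+1) ++ [u, v]) =
      -(Rpow h S ω p (pairList X Y p ++ [RR h S X Y u, v]) +
        Rpow h S ω p (pairList X Y p ++ [u, RR h S X Y v])) := by
  have hcons : pairList X Y (p+1) ++ [u, v] = X :: Y :: (pairList X Y p ++ [u, v]) := by
    simp [pairList]
  rw [hcons, Rpow_succ_eval]
  set Zs : List V := pairList X Y p ++ [u, v] with hZsdef
  have hZlen : Zs.length = 2*p+2 := by simp [hZsdef, pairList_length]
  rw [hZlen]
  rw [show 2*p+2 = (2*p+1)+1 from rfl, Finset.sum_range_succ,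
    show 2*p+1 = (2*p)+1 from rfl, Finset.sum_range_succ]
  have hzero : ∑ j ∈ Finset.range (2*p),
      Rpow h S ω p (Zs.set j (RR h S X Y (Zs.getD j 0))) = 0 := by
    apply Finset.sum_eq_zero
    intro j hj
    have hj' : j < 2*p := Finset.mem_range.mp hj
    have hget : Zs.getD j 0 = if j % 2 = 0 then X else Y := by
      rw [hZsdef, List.getD_append _ _ _ _ (by rw [pairList_length]; omega)]
      exact pairList_getD X Y p j hj'
    rw [hget]
    have : RR h S X Y (if j % 2 = 0 then X else Y) = 0 := by
      split_ifs
      · exact hA1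
      · exact hA2
    rw [this]
    exact Rpow_set_zero h S ω p Zs hZlen j (by omega)
  have hget1 : Zs.getD (2*p) 0 = u := by
    rw [hZsdef, show 2*p = 2*p+0 from rfl, getD_pair_append]; rfl
  have hget2 : Zs.getD (2*p+1) 0 = v := by
    rw [hZsdef, getD_pair_append]; rfl
  have hset1 : Zs.set (2*p) (RR h S X Y u) = pairList X Y p ++ [RR h S X Y u, v] := by
    rw [hZsdef, show 2*p = 2*p+0 from rfl, set_pair_append]; rfl
  have hset2 : Zs.set (2*p+1) (RR h S X Y v) = pairList X Y p ++ [u, RR h S X Y v] := by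
    rw [hZsdef, set_pair_append]; rfl
  rw [hzero, hget1, hget2, hset1, hset2]
  ring

end Aux

theorem stmt7
    {V : Type*} [AddCommGroup V] [Module ℝ V]
    (n : ℕ) (hn : 2 ≤ n) (e : ℕ → V)
    (hbasis : ∃ b : Module.Basis (Fin (2 * n)) ℝ V, ∀ i : Fin (2 * n), b i = e (i.1 + 1))
    (h ω : V →ₗ[ℝ] V →ₗ[ℝ] ℝ)
    (hsymm : ∀ X Y, h X Y = h Y X)
    (halt : ∀ X, ω X X = 0)
    (S : V →ₗ[ℝ] V)
    (k : ℕ) (hk2 : 2 ≤ k) (hk : k ≤ 2 * n)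
    (α ε : ℝ) (hε : ε = 1 ∨ ε = -1)
    (hS1 : ∀ i, 1 ≤ i → i ≤ k - 1 → S (e i) = α • e i + e (i + 1))
    (hS2 : S (e k) = α • e k)
    (hh1 : ∀ i j, 1 ≤ i → i ≤ k → 1 ≤ j → j ≤ k → i + j = k + 1 → h (e i) (e j) = ε)
    (hh0 : ∀ i j, 1 ≤ i → i ≤ 2 * n → 1 ≤ j → j ≤ 2 * n → min i j ≤ k →
      ¬(i ≤ k ∧ j ≤ k ∧ i + j = k + 1) → h (e i) (e j) = 0)
    (hk3 : 3 < k)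
    (p : ℕ) (hp : 1 ≤ p) :
    Rpow h S ω p (pairList (e 1) (e (k - 1)) (p + 1)) = 0 ∧
    Rpow h S ω p (pairList (e 1) (e (k - 1)) p ++ [e 2, e (k - 1)]) =
      (-1) ^ p * ε ^ p * (α * ω (e 1) (e (k - 1)) + ω (e 2) (e (k - 1))) ∧
    ∀ i, 1 ≤ i → i ≤ 2 * n → i ≠ 2 → i ≠ k →
      Rpow h S ω p (pairList (e 1) (e (k - 1)) p ++ [e i, e k]) =
        ε ^ p * (α * ω (e i) (e (k - 1)) + ω (e i) (e k)) := by
  have hAe : ∀ j, 1 ≤ j → j ≤ 2*n → j ≠ 2 → j ≠ k →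
      RR h S (e 1) (e (k-1)) (e j) = 0 := by
    intro j hj1 hj2 hj3 hj4
    have h5 : h (e (k-1)) (e j) = 0 := by
      apply hh0 (k-1) j (by omega) (by omega) hj1 hj2 (by omega)
      rintro ⟨-, -, hs⟩; omega
    have h6 : h (e 1) (e j) = 0 := by
      apply hh0 1 j (by omega) (by omega) hj1 hj2 (by omega)
      rintro ⟨-, -, hs⟩; omega
    simp [RR, h5, h6]
  have hA1 : RR h S (e 1) (e (k-1)) (e 1) = 0 :=
    hAe 1 (by omega) (by omega) (by omega) (by omega)
  have hA2 : RR h S (e 1) (e (k-1)) (e (k-1)) = 0 :=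
    hAe (k-1) (by omega) (by omega) (by omega) (by omega)
  have hAe2 : RR h S (e 1) (e (k-1)) (e 2) = (ε*α) • e 1 + ε • e 2 := by
    have h5 : h (e (k-1)) (e 2) = ε :=
      hh1 (k-1) 2 (by omega) (by omega) (by omega) (by omega) (by omega)
    have h6 : h (e 1) (e 2) = 0 := by
      apply hh0 1 2 (by omega) (by omega) (by omega) (by omega) (by omega)
      rintro ⟨-, -, hs⟩; omega
    have h7 := hS1 1 le_rfl (by omega)
    norm_num at h7
    simp only [RR, h5, h6, h7]
    module
  have hAek : RR h S (e 1) (e (k-1)) (e k) = (-(ε*α)) • e (k-1) + (-ε) • e k := by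
    have h5 : h (e (k-1)) (e k) = 0 := by
      apply hh0 (k-1) k (by omega) (by omega) (by omega) (by omega) (by omega)
      rintro ⟨-, -, hs⟩; omega
    have h6 : h (e 1) (e k) = ε :=
      hh1 1 k (by omega) (by omega) (by omega) (by omega) (by omega)
    have h7 : S (e (k-1)) = α • e (k-1) + e k := by
      have := hS1 (k-1) (by omega) le_rfl
      rwa [show k - 1 + 1 = k by omega] at this
    simp only [RR, h5, h6, h7]
    module
  have Ftail0a : ∀ q (v' : V),
      Rpow h S ω q (pairList (e 1) (e (k-1)) q ++ [(0:V), v']) = 0 := by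
    intro q v'
    have hlen : (pairList (e 1) (e (k-1)) q ++ [(0:V), v']).length = 2*q+2 := by
      simp only [List.length_append, pairList_length, List.length_cons,
        List.length_nil] <;> omega
    have h2 := Rpow_set_zero h S ω q _ hlen (2*q) (by omega)
    rw [show (2*q) = 2*q+0 from rfl, set_pair_append] at h2
    simpa using h2
  have Ftail0b : ∀ q (u' : V),
      Rpow h S ω q (pairList (e 1) (e (k-1)) q ++ [u', (0:V)]) = 0 := by
    intro q u'
    have hlen : (pairList (e 1) (e (k-1)) q ++ [u', (0:V)]).length = 2*q+2 := by
      simp only [List.length_append, pairList_length, List.length_cons,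
        List.length_nil] <;> omega
    have h2 := Rpow_set_zero h S ω q _ hlen (2*q+1) (by omega)
    rw [set_pair_append] at h2
    simpa using h2
  have step' : ∀ q (u v : V),
      Rpow h S ω (q+1) (pairList (e 1) (e (k-1)) (q+1) ++ [u, v]) =
        -(Rpow h S ω q (pairList (e 1) (e (k-1)) q ++ [RR h S (e 1) (e (k-1)) u, v]) +
          Rpow h S ω q (pairList (e 1) (e (k-1)) q ++ [u, RR h S (e 1) (e (k-1)) v])) :=
    stepL h S ω _ _ hA1 hA2
  have one : ∀ q, Rpow h S ω (q+1) (pairList (e 1) (e (k-1)) (q+2)) = 0 := by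
    intro q
    rw [pairList_snoc (e 1) (e (k-1)) (q+1), step' q (e 1) (e (k-1)), hA1, hA2,
      Ftail0a, Ftail0b]
    norm_num
  have four : ∀ q i, 1 ≤ i → i ≤ 2*n → i ≠ 2 → i ≠ k →
      Rpow h S ω (q+1) (pairList (e 1) (e (k-1)) (q+1) ++ [e i, e (k-1)]) = 0 := by
    intro q i h1 h2 h3 h4
    rw [step' q (e i) (e (k-1)), hAe i h1 h2 h3 h4, hA2, Ftail0a, Ftail0b]
    norm_num
  have two : ∀ p, 1 ≤ p →
      Rpow h S ω p (pairList (e 1) (e (k-1)) p ++ [e 2, e (k-1)]) =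
        (-1)^p * ε^p * (α * ω (e 1) (e (k-1)) + ω (e 2) (e (k-1))) := by
    intro p hp
    induction p, hp using Nat.le_induction with
    | base =>
      have hb := step' 0 (e 2) (e (k-1))
      norm_num at hb
      rw [hb, hAe2, hA2]
      simp only [pairList, List.nil_append, Rpow_zero_eval, map_add, map_smul,
        LinearMap.add_apply, LinearMap.smul_apply, smul_eq_mul, map_zero,
        LinearMap.zero_apply]
      ring
    | succ p hp ih =>
      rw [step' p (e 2) (e (k-1)), hAe2, hA2, Ftail0b]
      have hlin := Rpow_lin h S ω p (pairList (e 1) (e (k-1)) p ++ [e 1, e (k-1)])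
        (by simp only [List.length_append, pairList_length, List.length_cons,
          List.length_nil] <;> omega)
        (2*p)
        (by simp only [List.length_append, pairList_length, List.length_cons,
          List.length_nil] <;> omega)
        (ε*α) ε (e 1) (e 2)
      rw [show 2*p = 2*p + 0 from rfl, set_pair_append, set_pair_append,
        set_pair_append] at hlin
      simp only [List.set_cons_zero] at hlin
      rw [hlin]
      have hone : Rpow h S ω p (pairList (e 1) (e (k-1)) p ++ [e 1, e (k-1)]) = 0 := by
        obtain ⟨q, rfl⟩ : ∃ q, p = q+1 := ⟨p-1, by omega⟩
        rw [← pairList_snoc]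
        exact one q
      rw [hone, ih]
      ring
  have three : ∀ i, 1 ≤ i → i ≤ 2*n → i ≠ 2 → i ≠ k → ∀ p, 1 ≤ p →
      Rpow h S ω p (pairList (e 1) (e (k-1)) p ++ [e i, e k]) =
        ε^p * (α * ω (e i) (e (k-1)) + ω (e i) (e k)) := by
    intro i h1 h2 h3 h4 p hp
    induction p, hp using Nat.le_induction with
    | base =>
      have hb := step' 0 (e i) (e k)
      norm_num at hb
      rw [hb, hAe i h1 h2 h3 h4, hAek]
      simp only [pairList, List.nil_append, Rpow_zero_eval, map_add, map_smul,
        LinearMap.add_apply, LinearMap.smul_apply, smul_eq_mul, map_zero,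
        LinearMap.zero_apply]
      ring
    | succ p hp ih =>
      rw [step' p (e i) (e k), hAe i h1 h2 h3 h4, hAek, Ftail0a]
      have hlin := Rpow_lin h S ω p (pairList (e 1) (e (k-1)) p ++ [e i, e (k-1)])
        (by simp only [List.length_append, pairList_length, List.length_cons,
          List.length_nil] <;> omega)
        (2*p+1)
        (by simp only [List.length_append, pairList_length, List.length_cons,
          List.length_nil] <;> omega)
        (-(ε*α)) (-ε) (e (k-1)) (e k)
      rw [set_pair_append, set_pair_append, set_pair_append] at hlin
      simp only [List.set_cons_succ, List.set_cons_zero] at hlin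
      rw [hlin]
      have hfour : Rpow h S ω p (pairList (e 1) (e (k-1)) p ++ [e i, e (k-1)]) = 0 := by
        obtain ⟨q, rfl⟩ : ∃ q, p = q+1 := ⟨p-1, by omega⟩
        exact four q i h1 h2 h3 h4
      rw [hfour, ih]
      ring
  refine ⟨?_, two p hp, fun i h1 h2 h3 h4 => three i h1 h2 h3 h4 p hp⟩
  obtain ⟨q, rfl⟩ : ∃ q, p = q+1 := ⟨p-1, by omega⟩
  exact one q
end
end

section
/- For every p ≥ 1: (R^p·ω)(e_1, e_2, e_1, e_2, …, e_1, e_2), with p+1 pairs (e_1, e_2), equals (−1)^p ε^p p! ω(e_1, e_2). -/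
noncomputable section

section Aux

variable {V : Type*} [AddCommGroup V] [Module ℝ V]
variable (h : V →ₗ[ℝ] V →ₗ[ℝ] ℝ) (S : V →ₗ[ℝ] V) (ω : V →ₗ[ℝ] V →ₗ[ℝ] ℝ)

lemma RR_smul₁ (c : ℝ) (X Y Z : V) : RR h S (c • X) Y Z = c • RR h S X Y Z := by
  simp [RR, smul_sub, smul_smul, mul_comm]

lemma RR_smul₂ (c : ℝ) (X Y Z : V) : RR h S X (c • Y) Z = c • RR h S X Y Z := by
  simp [RR, smul_sub, smul_smul, mul_comm]

lemma RR_smul₃ (c : ℝ) (X Y Z : V) : RR h S X Y (c • Z) = c • RR h S X Y Z := by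
  simp [RR, smul_sub, smul_smul, mul_comm]

lemma Rpow_succ (k : ℕ) : Rpow h S ω (k + 1) = RAct h S (Rpow h S ω k) := by
  unfold Rpow; rw [Function.iterate_succ_apply']

lemma RAct_cons (T : List V → ℝ) (X Y : V) (Zs : List V) :
    RAct h S T (X :: Y :: Zs) =
      -∑ i ∈ Finset.range Zs.length, T (Zs.set i (RR h S X Y (Zs.getD i 0))) := rfl

lemma Rpow_set_smul : ∀ (k : ℕ) (l : List V) (i : ℕ), i < l.length → l.length ≤ 2 * k + 2 →
    ∀ (c : ℝ) (v : V), Rpow h S ω k (l.set i (c • v)) = c * Rpow h S ω k (l.set i v) := by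
  intro k
  induction k with
  | zero =>
    intro l i hi hl c v
    rcases l with _ | ⟨a, l⟩
    · simp at hi
    rcases i with _ | i
    · simp [Rpow]
    rcases l with _ | ⟨b, l⟩
    · simp at hi
    rcases i with _ | i
    · simp [Rpow]
    · simp only [List.length_cons] at hi hl; omega
  | succ k ih =>
    intro l i hi hl c v
    rcases l with _ | ⟨X, l⟩
    · simp at hi
    rcases l with _ | ⟨Y, Zs⟩
    · have hi0 : i = 0 := by simp at hi; omega
      subst hi0
      simp [Rpow_succ, RAct]
    simp only [List.length_cons] at hi hl
    rcases i with _ | (_ | j)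
    · simp only [List.set_cons_zero, Rpow_succ, RAct_cons]
      have step : ∀ j ∈ Finset.range Zs.length,
          Rpow h S ω k (Zs.set j (RR h S (c • v) Y (Zs.getD j 0)))
            = c * Rpow h S ω k (Zs.set j (RR h S v Y (Zs.getD j 0))) := by
        intro j hj
        rw [RR_smul₁, ih Zs j (by simpa using hj) (by omega)]
      rw [Finset.sum_congr rfl step, ← Finset.mul_sum]
      ring
    · simp only [List.set_cons_succ, List.set_cons_zero, Rpow_succ, RAct_cons]
      have step : ∀ j ∈ Finset.range Zs.length,
          Rpow h S ω k (Zs.set j (RR h S X (c • v) (Zs.getD j 0)))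
            = c * Rpow h S ω k (Zs.set j (RR h S X v (Zs.getD j 0))) := by
        intro j hj
        rw [RR_smul₂, ih Zs j (by simpa using hj) (by omega)]
      rw [Finset.sum_congr rfl step, ← Finset.mul_sum]
      ring
    · have hj : j < Zs.length := by omega
      simp only [List.set_cons_succ, Rpow_succ, RAct_cons, List.length_set]
      have step : ∀ m ∈ Finset.range Zs.length,
          Rpow h S ω k ((Zs.set j (c • v)).set m (RR h S X Y ((Zs.set j (c • v)).getD m 0)))
            = c * Rpow h S ω k ((Zs.set j v).set m (RR h S X Y ((Zs.set j v).getD m 0))) := by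
        intro m hm
        have hm' : m < Zs.length := by simpa using hm
        by_cases hmj : m = j
        · subst hmj
          have g1 : (Zs.set m (c • v)).getD m 0 = c • v := by
            simp [List.getD_eq_getElem?_getD, List.getElem?_set_self', hm']
          have g2 : (Zs.set m v).getD m 0 = v := by
            simp [List.getD_eq_getElem?_getD, List.getElem?_set_self', hm']
          rw [g1, g2, List.set_set, List.set_set, RR_smul₃,
            ih Zs m (by simpa using hm') (by omega)]
        · have hjm : j ≠ m := fun e => hmj e.symm
          have g1 : (Zs.set j (c • v)).getD m 0 = Zs.getD m 0 := by
            simp [List.getD_eq_getElem?_getD, List.getElem?_set_ne hjm]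
          have g2 : (Zs.set j v).getD m 0 = Zs.getD m 0 := by
            simp [List.getD_eq_getElem?_getD, List.getElem?_set_ne hjm]
          rw [g1, g2, List.set_comm (c • v) _ (l := Zs) hjm, List.set_comm v _ (l := Zs) hjm,
            ih (Zs.set m (RR h S X Y (Zs.getD m 0))) j (by simpa using hj) (by simpa using by omega)]
      rw [Finset.sum_congr rfl step, ← Finset.mul_sum]
      ring

lemma sum_range_two_mul (n : ℕ) (g : ℕ → ℝ) :
    ∑ i ∈ Finset.range (2 * n), g i = ∑ m ∈ Finset.range n, (g (2 * m) + g (2 * m + 1)) := by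
  induction n with
  | zero => simp
  | succ n ih =>
    rw [Nat.mul_succ, Finset.sum_range_succ, Finset.sum_range_succ, Finset.sum_range_succ, ih]
    ring

/-- interleave a fixed vector `x` before each entry. -/
def IL (x : V) : List V → List V
  | [] => []
  | z :: zs => x :: z :: IL x zs

lemma IL_length (x : V) : ∀ zs : List V, (IL x zs).length = 2 * zs.length
  | [] => rfl
  | z :: zs => by simp [IL, IL_length x zs]; ring

lemma IL_getD_even (x : V) : ∀ (zs : List V) (m : ℕ), m < zs.length →
    (IL x zs).getD (2 * m) 0 = x
  | z :: zs, 0, _ => rfl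
  | z :: zs, m + 1, hm => by
    rw [show 2 * (m + 1) = 2 * m + 1 + 1 from by ring]
    show (IL x zs).getD (2 * m) 0 = x
    exact IL_getD_even x zs m (by simpa using hm)

lemma IL_getD_odd (x : V) : ∀ (zs : List V) (m : ℕ), m < zs.length →
    (IL x zs).getD (2 * m + 1) 0 = zs.getD m 0
  | z :: zs, 0, _ => rfl
  | z :: zs, m + 1, hm => by
    rw [show 2 * (m + 1) + 1 = 2 * m + 1 + 1 + 1 from by ring]
    show (IL x zs).getD (2 * m + 1) 0 = zs.getD m 0
    exact IL_getD_odd x zs m (by simpa using hm)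

lemma IL_set_odd (x : V) : ∀ (zs : List V) (m : ℕ) (v : V),
    (IL x zs).set (2 * m + 1) v = IL x (zs.set m v)
  | [], m, v => rfl
  | z :: zs, 0, v => rfl
  | z :: zs, m + 1, v => by
    rw [show 2 * (m + 1) + 1 = 2 * m + 1 + 1 + 1 from by ring]
    show x :: z :: (IL x zs).set (2 * m + 1) v = x :: z :: IL x (zs.set m v)
    rw [IL_set_odd x zs m v]

lemma pairList_eq_IL (X Y : V) : ∀ k, pairList X Y k = IL X (List.replicate k Y)
  | 0 => rfl
  | k + 1 => by
    show X :: Y :: pairList X Y k = X :: Y :: IL X (List.replicate k Y)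
    rw [pairList_eq_IL X Y k]

lemma mem_set_of {P : V → Prop} : ∀ (zs : List V) (m : ℕ) (v : V),
    (∀ z ∈ zs, P z) → P v → ∀ w ∈ zs.set m v, P w
  | [], m, v, hzs, hv => by simp
  | z :: zs, 0, v, hzs, hv => by
    intro w hw
    rcases List.mem_cons.1 hw with rfl | hw
    · exact hv
    · exact hzs w (List.mem_cons_of_mem _ hw)
  | z :: zs, m + 1, v, hzs, hv => by
    intro w hw
    rcases List.mem_cons.1 hw with rfl | hw
    · exact hzs w (List.mem_cons_self)
    · exact mem_set_of zs m v (fun a ha => hzs a (List.mem_cons_of_mem _ ha)) hv w hw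

lemma key (x y u : V) (ε : ℝ)
    (hRRx : ∀ z, (z = y ∨ z = u) → RR h S x z x = 0)
    (hRRz : ∀ z z', (z = y ∨ z = u) → (z' = y ∨ z' = u) → RR h S x z z' = ε • u)
    (hωu : ω x u = ω x y) :
    ∀ (k : ℕ) (zs : List V), zs.length = k + 1 → (∀ z ∈ zs, z = y ∨ z = u) →
      Rpow h S ω k (IL x zs) = (-ε) ^ k * (Nat.factorial k : ℝ) * ω x y := by
  intro k
  induction k with
  | zero =>
    intro zs hlen hmem
    rcases zs with _ | ⟨z, zs⟩
    · simp at hlen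
    rcases zs with _ | ⟨z', zs⟩
    · rcases hmem z (List.mem_cons_self) with rfl | rfl <;> simp [IL, Rpow, hωu]
    · simp at hlen
  | succ k ih =>
    intro zs hlen hmem
    rcases zs with _ | ⟨z, zs⟩
    · simp at hlen
    have hz := hmem z (List.mem_cons_self)
    have hlen' : zs.length = k + 1 := by simpa using hlen
    rw [show IL x (z :: zs) = x :: z :: IL x zs from rfl, Rpow_succ, RAct_cons, IL_length,
      sum_range_two_mul]
    have step : ∀ m ∈ Finset.range zs.length,
        (Rpow h S ω k ((IL x zs).set (2 * m) (RR h S x z ((IL x zs).getD (2 * m) 0)))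
          + Rpow h S ω k ((IL x zs).set (2 * m + 1) (RR h S x z ((IL x zs).getD (2 * m + 1) 0))))
        = ε * ((-ε) ^ k * (Nat.factorial k : ℝ) * ω x y) := by
      intro m hm
      have hm' : m < zs.length := by simpa using hm
      have heven : Rpow h S ω k ((IL x zs).set (2 * m) (RR h S x z ((IL x zs).getD (2 * m) 0)))
          = 0 := by
        rw [IL_getD_even x zs m hm', hRRx z hz, show (0 : V) = (0 : ℝ) • (0 : V) from by simp,
          Rpow_set_smul h S ω k _ _ (by rw [IL_length]; omega) (by rw [IL_length]; omega)]
        simp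
      have hmemm : zs.getD m 0 = y ∨ zs.getD m 0 = u := by
        rw [List.getD_eq_getElem zs 0 hm']
        exact hmem _ (List.mem_cons_of_mem _ (List.getElem_mem hm'))
      have hodd : Rpow h S ω k ((IL x zs).set (2 * m + 1)
            (RR h S x z ((IL x zs).getD (2 * m + 1) 0)))
          = ε * ((-ε) ^ k * (Nat.factorial k : ℝ) * ω x y) := by
        rw [IL_getD_odd x zs m hm', hRRz z _ hz hmemm,
          Rpow_set_smul h S ω k _ _ (by rw [IL_length]; omega) (by rw [IL_length]; omega),
          IL_set_odd,
          ih (zs.set m u) (by simpa using hlen') (mem_set_of zs m u (fun a ha => hmem a (List.mem_cons_of_mem _ ha)) (Or.inr rfl))]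
      rw [heven, hodd, zero_add]
    rw [Finset.sum_congr rfl step, Finset.sum_const, Finset.card_range, hlen',
      Nat.factorial_succ]
    push_cast
    ring

end Aux
theorem stmt11
    {V : Type*} [AddCommGroup V] [Module ℝ V]
    (n : ℕ) (hn : 2 ≤ n) (e : ℕ → V)
    (hbasis : ∃ b : Module.Basis (Fin (2 * n)) ℝ V, ∀ i : Fin (2 * n), b i = e (i.1 + 1))
    (h ω : V →ₗ[ℝ] V →ₗ[ℝ] ℝ)
    (hsymm : ∀ X Y, h X Y = h Y X)
    (halt : ∀ X, ω X X = 0)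
    (S : V →ₗ[ℝ] V)
    (α ε : ℝ) (hε : ε = 1 ∨ ε = -1)
    (hS1 : S (e 1) = α • e 1 + e 2)
    (hS2 : S (e 2) = α • e 2 + e 3)
    (hS3 : S (e 3) = α • e 3)
    (hh13 : h (e 1) (e 3) = ε) (hh31 : h (e 3) (e 1) = ε) (hh22 : h (e 2) (e 2) = ε)
    (hh0 : ∀ i j, 1 ≤ i → i ≤ 2 * n → 1 ≤ j → j ≤ 2 * n → min i j ≤ 3 →
      ¬((i = 1 ∧ j = 3) ∨ (i = 3 ∧ j = 1) ∨ (i = 2 ∧ j = 2)) → h (e i) (e j) = 0)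
    (p : ℕ) (hp : 1 ≤ p) :
    Rpow h S ω p (pairList (e 1) (e 2) (p + 1)) =
      (-1) ^ p * ε ^ p * (Nat.factorial p : ℝ) * ω (e 1) (e 2) := by
  have h11 : h (e 1) (e 1) = 0 := hh0 1 1 le_rfl (by omega) le_rfl (by omega) (by omega) (by omega)
  have h12 : h (e 1) (e 2) = 0 := hh0 1 2 le_rfl (by omega) (by omega) (by omega) (by omega) (by omega)
  have h21 : h (e 2) (e 1) = 0 := hh0 2 1 (by omega) (by omega) le_rfl (by omega) (by omega) (by omega)
  have h1u : h (e 1) (S (e 1)) = 0 := by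
    rw [hS1]; simp [h11, h12]
  have h2u : h (e 2) (S (e 1)) = ε := by
    rw [hS1]; simp [h21, hh22]
  have hu1 : h (S (e 1)) (e 1) = 0 := by
    rw [hS1]; simp [h11, h21]
  have huu : h (S (e 1)) (S (e 1)) = ε := by
    rw [hS1]; simp [map_add, map_smul, h11, h12, h21, hh22]
  have hu2 : h (S (e 1)) (e 2) = ε := by
    rw [hS1]; simp [h12, hh22]
  have hRRx : ∀ z, (z = e 2 ∨ z = S (e 1)) → RR h S (e 1) z (e 1) = 0 := by
    rintro z (rfl | rfl) <;> simp [RR, h21, h11, hu1]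
  have hRRz : ∀ z z', (z = e 2 ∨ z = S (e 1)) → (z' = e 2 ∨ z' = S (e 1)) →
      RR h S (e 1) z z' = ε • S (e 1) := by
    rintro z z' (rfl | rfl) (rfl | rfl) <;> simp [RR, hh22, h12, h2u, hu2, huu, h1u]
  have hωu : ω (e 1) (S (e 1)) = ω (e 1) (e 2) := by
    rw [hS1]; simp [halt (e 1)]
  rw [pairList_eq_IL,
    key h S ω (e 1) (e 2) (S (e 1)) ε hRRx hRRz hωu p (List.replicate (p + 1) (e 2))
      (by simp) (fun z hz => Or.inl (List.eq_of_mem_replicate hz)),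
    neg_pow]
end
end
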